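/- Let R be a quasi-unital ring. For any left R-module M, the smoothening R ⊗_R M is itself a smooth left R-module: the canonical map R ⊗_R (R ⊗_R M) → R ⊗_R M is an isomorphism. -/

import Mathlib

open TensorProduct LinearMap

variable (R : Type) [NonUnitalRing R] [Module ℂ R] [SMulCommClass ℂ R R]
  [IsScalarTower ℂ R R]

/-- The bar differential `R ⊗ R ⊗ R → R ⊗ R`. -/
noncomputable def barD : (R ⊗[ℂ] (R ⊗[ℂ] R)) →ₗ[ℂ] R ⊗[ℂ] R :=
  (rTensor R (mul' ℂ R)) ∘ₗ (TensorProduct.assoc ℂ R R R).symm.toLinearMap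
    - lTensor R (mul' ℂ R)

/-- `R` is quasi-unital: the canonical map `R ⊗_R R → R` is an isomorphism. -/
def IsQuasiUnital : Prop :=
  ∃ f : ((R ⊗[ℂ] R) ⧸ LinearMap.range (barD R)) →ₗ[ℂ] R,
    f ∘ₗ (LinearMap.range (barD R)).mkQ = mul' ℂ R ∧ Function.Bijective f

variable {M : Type} [AddCommGroup M] [Module ℂ M]

/-- The bar differential `R ⊗ R ⊗ M → R ⊗ M` for a left module with bilinear
action `act`. -/
noncomputable def barDM {M : Type} [AddCommGroup M] [Module ℂ M]
    (act : R →ₗ[ℂ] M →ₗ[ℂ] M) :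
    (R ⊗[ℂ] (R ⊗[ℂ] M)) →ₗ[ℂ] R ⊗[ℂ] M :=
  (rTensor M (mul' ℂ R)) ∘ₗ (TensorProduct.assoc ℂ R R M).symm.toLinearMap
    - lTensor R (TensorProduct.lift act)

/-- The smoothening `R ⊗_R M`. -/
noncomputable abbrev Smoothening (act : R →ₗ[ℂ] M →ₗ[ℂ] M) :=
  (R ⊗[ℂ] M) ⧸ LinearMap.range (barDM R act)

section Aux

variable {R}
variable (actM : R →ₗ[ℂ] M →ₗ[ℂ] M)
variable (actS : R →ₗ[ℂ] Smoothening R actM →ₗ[ℂ] Smoothening R actM)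

lemma barD_tmul (a b c : R) :
    barD R (a ⊗ₜ[ℂ] (b ⊗ₜ[ℂ] c)) = (a * b) ⊗ₜ[ℂ] c - a ⊗ₜ[ℂ] (b * c) := by
  simp [barD, mul'_apply]

lemma barDM_tmul (a b : R) (m : M) :
    barDM R actM (a ⊗ₜ[ℂ] (b ⊗ₜ[ℂ] m)) = (a * b) ⊗ₜ[ℂ] m - a ⊗ₜ[ℂ] (actM b m) := by
  simp [barDM, mul'_apply]

lemma relS_aux (a b : R) (m : M) :
    (LinearMap.range (barDM R actM)).mkQ ((a * b) ⊗ₜ[ℂ] m)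
      = (LinearMap.range (barDM R actM)).mkQ (a ⊗ₜ[ℂ] (actM b m)) := by
  rw [Submodule.mkQ_apply, Submodule.mkQ_apply, Submodule.Quotient.eq]
  exact ⟨a ⊗ₜ[ℂ] (b ⊗ₜ[ℂ] m), barDM_tmul actM a b m⟩

lemma relT_aux (a b : R) (s : Smoothening R actM) :
    (LinearMap.range (barDM R actS)).mkQ ((a * b) ⊗ₜ[ℂ] s)
      = (LinearMap.range (barDM R actS)).mkQ (a ⊗ₜ[ℂ] (actS b s)) := by
  rw [Submodule.mkQ_apply, Submodule.mkQ_apply, Submodule.Quotient.eq]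
  exact ⟨a ⊗ₜ[ℂ] (b ⊗ₜ[ℂ] s), barDM_tmul actS a b s⟩

/-- The raw bilinear map `(R ⊗ R) → M → (R ⊗ S)/im(barDM actS)`,
`a ⊗ b ↦ m ↦ [a ⊗ [b ⊗ m]]`. -/
noncomputable def FrawAux : (R ⊗[ℂ] R) →ₗ[ℂ] M →ₗ[ℂ]
    ((R ⊗[ℂ] Smoothening R actM) ⧸ LinearMap.range (barDM R actS)) :=
  TensorProduct.curry ((LinearMap.range (barDM R actS)).mkQ ∘ₗ
    (lTensor R (LinearMap.range (barDM R actM)).mkQ) ∘ₗ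
    (TensorProduct.assoc ℂ R R M).toLinearMap)

lemma FrawAux_tmul (a b : R) (m : M) :
    FrawAux actM actS (a ⊗ₜ[ℂ] b) m = (LinearMap.range (barDM R actS)).mkQ
      (a ⊗ₜ[ℂ] (LinearMap.range (barDM R actM)).mkQ (b ⊗ₜ[ℂ] m)) := by
  simp [FrawAux]

variable (hactS : ∀ (r s : R) (m : M),
      actS r ((LinearMap.range (barDM R actM)).mkQ (s ⊗ₜ[ℂ] m)) =
        (LinearMap.range (barDM R actM)).mkQ ((r * s) ⊗ₜ[ℂ] m))

include hactS in
lemma FrawAux_cond : LinearMap.range (barD R) ≤ ker (FrawAux actM actS) := by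
  rw [LinearMap.range_le_ker_iff]
  ext a b c m
  simp only [TensorProduct.AlgebraTensorModule.curry_apply, TensorProduct.curry_apply,
    LinearMap.coe_restrictScalars, LinearMap.zero_apply, _root_.zero_apply,
    coe_comp, Function.comp_apply]
  rw [barD_tmul, map_sub, LinearMap.sub_apply, FrawAux_tmul, FrawAux_tmul,
    ← hactS, ← relT_aux, sub_self]

/-- `FrawAux` descended to the quotient `(R ⊗ R)/im(barD)`. -/
noncomputable def betaQ : ((R ⊗[ℂ] R) ⧸ LinearMap.range (barD R)) →ₗ[ℂ] M →ₗ[ℂ]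
    ((R ⊗[ℂ] Smoothening R actM) ⧸ LinearMap.range (barDM R actS)) :=
  Submodule.liftQ (LinearMap.range (barD R)) (FrawAux actM actS)
    (FrawAux_cond actM actS hactS)

lemma betaQ_mk (t : R ⊗[ℂ] R) :
    betaQ actM actS hactS ((LinearMap.range (barD R)).mkQ t) = FrawAux actM actS t :=
  rfl

end Aux

set_option maxHeartbeats 1000000 in
/-- For `R` quasi-unital and any left `R`-module `M`, the smoothening `S = R ⊗_R M`
(with the left action in the first tensor factor) is itself smooth: the canonical map
`R ⊗_R S → S` is an isomorphism. -/
theorem smoothening_is_smooth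
    (hR : IsQuasiUnital R)
    (actM : R →ₗ[ℂ] M →ₗ[ℂ] M)
    (hactM : ∀ (r s : R) (m : M), actM (r * s) m = actM r (actM s m))
    (actS : R →ₗ[ℂ] Smoothening R actM →ₗ[ℂ] Smoothening R actM)
    (hactS : ∀ (r s : R) (m : M),
      actS r ((LinearMap.range (barDM R actM)).mkQ (s ⊗ₜ[ℂ] m)) =
        (LinearMap.range (barDM R actM)).mkQ ((r * s) ⊗ₜ[ℂ] m)) :
    ∀ f : ((R ⊗[ℂ] Smoothening R actM) ⧸ LinearMap.range (barDM R actS)) →ₗ[ℂ]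
        Smoothening R actM,
      f ∘ₗ (LinearMap.range (barDM R actS)).mkQ = TensorProduct.lift actS →
      Function.Bijective f := by
  intro f hf
  obtain ⟨fR, hfR1, hfRbij⟩ := hR
  have hfapp : ∀ x, f ((LinearMap.range (barDM R actS)).mkQ x)
      = TensorProduct.lift actS x := fun x => LinearMap.congr_fun hf x
  have hfRapp : ∀ x, fR ((LinearMap.range (barD R)).mkQ x) = mul' ℂ R x :=
    fun x => LinearMap.congr_fun hfR1 x
  set e := LinearEquiv.ofBijective fR hfRbij with hedef
  have hu1 : ∀ r, fR (e.symm r) = r := fun r => e.apply_symm_apply r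
  have hu2 : ∀ a b : R, e.symm (a * b) = (LinearMap.range (barD R)).mkQ (a ⊗ₜ[ℂ] b) := by
    intro a b
    apply e.injective
    rw [e.apply_symm_apply]
    show a * b = fR _
    rw [hfRapp, mul'_apply]
  have hmulu : ∀ (r : R) (t : R ⊗[ℂ] R),
      (LinearMap.range (barD R)).mkQ t = e.symm r → mul' ℂ R t = r := by
    intro r t ht
    have h := hfRapp t
    rw [ht, hu1] at h
    exact h.symm
  have lemA : ∀ (t : R ⊗[ℂ] R) (m : M),
      f (FrawAux actM actS t m)
        = (LinearMap.range (barDM R actM)).mkQ ((mul' ℂ R t) ⊗ₜ[ℂ] m) := by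
    intro t m
    induction t using TensorProduct.induction_on with
    | zero => simp
    | tmul a b =>
        rw [FrawAux_tmul, hfapp, mul'_apply, lift.tmul, hactS]
    | add x y hx hy =>
        simp only [map_add, LinearMap.add_apply, add_tmul, hx, hy]
  have lemB : ∀ (t : R ⊗[ℂ] R) (b : R) (m : M),
      FrawAux actM actS t (actM b m) = (LinearMap.range (barDM R actS)).mkQ
        ((mul' ℂ R t) ⊗ₜ[ℂ] (LinearMap.range (barDM R actM)).mkQ (b ⊗ₜ[ℂ] m)) := by
    intro t b m
    induction t using TensorProduct.induction_on with
    | zero => simp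
    | tmul c d =>
        rw [FrawAux_tmul, ← relS_aux, ← hactS, ← relT_aux, mul'_apply]
    | add x y hx hy =>
        simp only [map_add, LinearMap.add_apply, add_tmul, hx, hy]
  set G₀ : (R ⊗[ℂ] M) →ₗ[ℂ]
      ((R ⊗[ℂ] Smoothening R actM) ⧸ LinearMap.range (barDM R actS)) :=
    TensorProduct.lift ((betaQ actM actS hactS) ∘ₗ e.symm.toLinearMap) with hG₀def
  have hG₀ : ∀ (r : R) (m : M),
      G₀ (r ⊗ₜ[ℂ] m) = betaQ actM actS hactS (e.symm r) m := by
    intro r m; simp [hG₀def]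
  have hcond2 : LinearMap.range (barDM R actM) ≤ ker G₀ := by
    rintro x ⟨y, rfl⟩
    rw [LinearMap.mem_ker]
    induction y using TensorProduct.induction_on with
    | zero => simp
    | tmul a z =>
        induction z using TensorProduct.induction_on with
        | zero => simp
        | tmul b m =>
            rw [barDM_tmul, map_sub, hG₀, hG₀, hu2, betaQ_mk, FrawAux_tmul]
            obtain ⟨t, ht⟩ :=
              Submodule.mkQ_surjective (LinearMap.range (barD R)) (e.symm a)
            rw [← ht, betaQ_mk, lemB, hmulu a t ht, sub_self]
        | add z w hz hw =>
            rw [tmul_add, map_add, map_add, hz, hw, add_zero]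
    | add x y hx hy => rw [map_add, map_add, hx, hy, add_zero]
  set g := Submodule.liftQ (LinearMap.range (barDM R actM)) G₀ hcond2 with hgdef
  have hg : ∀ y, g ((LinearMap.range (barDM R actM)).mkQ y) = G₀ y := fun y => rfl
  have hfg : ∀ s, f (g s) = s := by
    intro s
    obtain ⟨y, rfl⟩ := Submodule.mkQ_surjective (LinearMap.range (barDM R actM)) s
    rw [hg]
    induction y using TensorProduct.induction_on with
    | zero => simp
    | tmul r m =>
        rw [hG₀]
        obtain ⟨t, ht⟩ :=
          Submodule.mkQ_surjective (LinearMap.range (barD R)) (e.symm r)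
        rw [← ht, betaQ_mk, lemA, hmulu r t ht]
    | add x y hx hy => simp only [map_add, hx, hy]
  have hgf : ∀ x, g (f x) = x := by
    intro x
    obtain ⟨y, rfl⟩ := Submodule.mkQ_surjective (LinearMap.range (barDM R actS)) x
    rw [hfapp]
    induction y using TensorProduct.induction_on with
    | zero => simp
    | tmul r s =>
        rw [lift.tmul]
        obtain ⟨z, rfl⟩ :=
          Submodule.mkQ_surjective (LinearMap.range (barDM R actM)) s
        induction z using TensorProduct.induction_on with
        | zero => simp
        | tmul b m =>
            rw [hactS, hg, hG₀, hu2, betaQ_mk, FrawAux_tmul]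
        | add z w hz hw => simp only [map_add, tmul_add, hz, hw]
    | add x y hx hy => simp only [map_add, hx, hy]
  exact ⟨Function.LeftInverse.injective hgf, Function.RightInverse.surjective hfg⟩
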